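/- Let J^x_k, J^y_k (k = 1, …, L−1) and B_k (k = 1, …, L) be real numbers and consider the XY spin-chain Hamiltonian H_spin := −Σ_{k=1}^{L−1} (J^x_k σ^x_k σ^x_{k+1} + J^y_k σ^y_k σ^y_{k+1}) − Σ_{k=1}^{L} B_k σ^z_k on (ℂ²)^{⊗L}. Define the antisymmetric matrix A ∈ ℝ^{2L×2L} whose only nonzero entries are A_{2k−1,2k} = 2B_k = −A_{2k,2k−1} for k = 1, …, L, A_{2k,2k+1} = 2J^x_k = −A_{2k+1,2k} for k = 1, …, L−1, and A_{2k−1,2k+2} = −2J^y_k = −A_{2k+2,2k−1} for k = 1, …, L−1. Then, with the Jordan–Wigner Majorana matrices, H_spin = (i/4) Σ_{j,k=1}^{2L} A_{j,k} m_j m_k. -/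

import Mathlib

open Matrix

noncomputable section

def pauliX : Matrix (Fin 2) (Fin 2) ℂ := !![0, 1; 1, 0]
def pauliY : Matrix (Fin 2) (Fin 2) ℂ := !![0, -Complex.I; Complex.I, 0]
def pauliZ : Matrix (Fin 2) (Fin 2) ℂ := !![1, 0; 0, -1]

def pauliAt (L : ℕ) (σ : Matrix (Fin 2) (Fin 2) ℂ) (k : Fin L) :
    Matrix (Fin L → Fin 2) (Fin L → Fin 2) ℂ :=
  fun ν μ => ∏ j, if j = k then σ (ν j) (μ j) else (if ν j = μ j then 1 else 0)

lemma pauliZ_apply (a b : Fin 2) :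
    pauliZ a b = if a = b then (-1 : ℂ) ^ ((a : ℕ)) else 0 := by
  fin_cases a <;> fin_cases b <;> simp [pauliZ]

lemma pauliAt_Z_diagonal (L : ℕ) (k : Fin L) :
    pauliAt L pauliZ k = Matrix.diagonal (fun ν => (-1 : ℂ) ^ ((ν k : ℕ))) := by
  ext ν μ
  by_cases h : ν = μ
  · subst h
    simp only [pauliAt, Matrix.diagonal_apply_eq, eq_self_iff_true, if_true]
    calc (∏ j, if j = k then pauliZ (ν j) (ν j) else 1)
        = pauliZ (ν k) (ν k) := by
          rw [Finset.prod_ite_eq' Finset.univ k (fun j => pauliZ (ν j) (ν j))]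
          simp
      _ = (-1 : ℂ) ^ ((ν k : ℕ)) := by rw [pauliZ_apply, if_pos rfl]
  · rw [Matrix.diagonal_apply_ne _ h]
    obtain ⟨j₀, hj₀⟩ := Function.ne_iff.mp h
    refine Finset.prod_eq_zero (Finset.mem_univ j₀) ?_
    by_cases hjk : j₀ = k
    · rw [if_pos hjk, pauliZ_apply, if_neg hj₀]
    · simp [hjk, hj₀]

lemma pauliAt_Z_commute (L : ℕ) (j k : Fin L) :
    Commute (pauliAt L pauliZ j) (pauliAt L pauliZ k) := by
  rw [pauliAt_Z_diagonal, pauliAt_Z_diagonal]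
  unfold Commute SemiconjBy
  rw [Matrix.diagonal_mul_diagonal, Matrix.diagonal_mul_diagonal]
  exact congrArg _ (funext fun i => mul_comm _ _)

/-- The Jordan–Wigner string `∏_{j<k} σ^z_j`. -/
def zString (L : ℕ) (k : Fin L) : Matrix (Fin L → Fin 2) (Fin L → Fin 2) ℂ :=
  Finset.noncommProd (Finset.univ.filter (· < k)) (fun j => pauliAt L pauliZ j)
    (fun a _ b _ _ => pauliAt_Z_commute L a b)

def pauliProd (L : ℕ) (M : Fin L → Matrix (Fin 2) (Fin 2) ℂ) :
    Matrix (Fin L → Fin 2) (Fin L → Fin 2) ℂ :=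
  fun ν μ => ∏ j, M j (ν j) (μ j)

lemma pauliProd_one (L : ℕ) : pauliProd L 1 = 1 := by
  ext ν μ
  by_cases h : ν = μ
  · subst h; simp [pauliProd, Matrix.one_apply]
  · obtain ⟨j₀, hj₀⟩ := Function.ne_iff.mp h
    rw [Matrix.one_apply_ne h]
    exact Finset.prod_eq_zero (Finset.mem_univ j₀) (by simp [Matrix.one_apply, hj₀])

lemma pauliProd_mul (L : ℕ) (M N : Fin L → Matrix (Fin 2) (Fin 2) ℂ) :
    pauliProd L M * pauliProd L N = pauliProd L (M * N) := by
  ext ν μ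
  rw [Matrix.mul_apply]
  unfold pauliProd
  simp only [Pi.mul_apply, Matrix.mul_apply]
  rw [Fintype.prod_sum (fun j c => M j (ν j) c * N j c (μ j))]
  exact Finset.sum_congr rfl fun κ _ => (Finset.prod_mul_distrib).symm

def pauliProdHom (L : ℕ) :
    (Fin L → Matrix (Fin 2) (Fin 2) ℂ) →* Matrix (Fin L → Fin 2) (Fin L → Fin 2) ℂ where
  toFun := pauliProd L
  map_one' := pauliProd_one L
  map_mul' := fun M N => (pauliProd_mul L M N).symm

lemma pauliAt_eq (L : ℕ) (σ : Matrix (Fin 2) (Fin 2) ℂ) (k : Fin L) :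
    pauliAt L σ k = pauliProd L (fun j => if j = k then σ else 1) := by
  ext ν μ
  refine Finset.prod_congr rfl fun j _ => ?_
  by_cases h : j = k
  · simp [h]
  · simp [h, Matrix.one_apply]


lemma noncommProd_pauliZ (L : ℕ) (s : Finset (Fin L)) :
    s.noncommProd (fun j => pauliAt L pauliZ j) (fun a _ b _ _ => pauliAt_Z_commute L a b)
      = pauliProd L (fun i => if i ∈ s then pauliZ else 1) := by
  induction s using Finset.cons_induction with
  | empty =>
    refine (Finset.noncommProd_empty _ _).trans ?_
    simp only [Finset.notMem_empty, if_false]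
    exact (pauliProd_one L).symm
  | cons a s ha ih =>
    refine (Finset.noncommProd_cons _ _ _ _ _).trans ?_
    refine (congrArg (pauliAt L pauliZ a * ·) ih).trans ?_
    rw [pauliAt_eq, pauliProd_mul]
    refine congrArg (pauliProd L) (funext fun i => ?_)
    simp only [Pi.mul_apply, Finset.mem_cons]
    by_cases h1 : i = a
    · subst h1
      simp [ha]
    · by_cases h2 : i ∈ s <;> simp [h1, h2]

lemma zString_eq (L : ℕ) (k : Fin L) :
    zString L k = pauliProd L (fun j => if j < k then pauliZ else 1) := by
  rw [zString, noncommProd_pauliZ]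
  refine congrArg (pauliProd L) (funext fun i => ?_)
  simp

/-- The odd Jordan–Wigner Majorana operator `m_{2k-1} = (∏_{j<k} σ^z_j) σ^x_k`. -/
def jwOdd (L : ℕ) (k : Fin L) : Matrix (Fin L → Fin 2) (Fin L → Fin 2) ℂ :=
  zString L k * pauliAt L pauliX k

/-- The even Jordan–Wigner Majorana operator `m_{2k} = (∏_{j<k} σ^z_j) σ^y_k`. -/
def jwEven (L : ℕ) (k : Fin L) : Matrix (Fin L → Fin 2) (Fin L → Fin 2) ℂ :=
  zString L k * pauliAt L pauliY k


lemma jwOdd_eq (L : ℕ) (k : Fin L) :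
    jwOdd L k = pauliProd L (fun j => if j < k then pauliZ else if j = k then pauliX else 1) := by
  rw [jwOdd, zString_eq, pauliAt_eq, pauliProd_mul]
  refine congrArg (pauliProd L) (funext fun j => ?_)
  simp only [Pi.mul_apply]
  by_cases h1 : j < k
  · simp [h1, ne_of_lt h1]
  · by_cases h2 : j = k <;> simp [h1, h2]

lemma jwEven_eq (L : ℕ) (k : Fin L) :
    jwEven L k = pauliProd L (fun j => if j < k then pauliZ else if j = k then pauliY else 1) := by
  rw [jwEven, zString_eq, pauliAt_eq, pauliProd_mul]
  refine congrArg (pauliProd L) (funext fun j => ?_)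
  simp only [Pi.mul_apply]
  by_cases h1 : j < k
  · simp [h1, ne_of_lt h1]
  · by_cases h2 : j = k <;> simp [h1, h2]


/-- The full family of Jordan–Wigner Majorana operators, indexed by `Fin L × Fin 2`:
the pair `(k, 0)` stands for `m_{2k-1}` and `(k, 1)` for `m_{2k}`. -/
def jw (L : ℕ) (p : Fin L × Fin 2) : Matrix (Fin L → Fin 2) (Fin L → Fin 2) ℂ :=
  if p.2 = 0 then jwOdd L p.1 else jwEven L p.1

/-- The coupling matrix of the XY spin chain: its only nonzero entries are
`A_{2k−1,2k} = 2B_k = −A_{2k,2k−1}` (`k = 1, …, L`),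
`A_{2k,2k+1} = 2J^x_k = −A_{2k+1,2k}` (`k = 1, …, L−1`), and
`A_{2k−1,2k+2} = −2J^y_k = −A_{2k+2,2k−1}` (`k = 1, …, L−1`), in the indexing where
`(k, 0)` stands for the Majorana index `2k−1` and `(k, 1)` for `2k`. -/
def xyCoupling (L : ℕ) (Jx Jy : Fin (L - 1) → ℝ) (B : Fin L → ℝ) :
    Matrix (Fin L × Fin 2) (Fin L × Fin 2) ℝ :=
  (∑ k : Fin L,
      (Matrix.single (k, 0) (k, 1) (2 * B k)
        - Matrix.single (k, 1) (k, 0) (2 * B k)))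
  + (∑ k : Fin (L - 1),
      (Matrix.single (⟨k.1, by have := k.2; omega⟩, 1) (⟨k.1 + 1, by have := k.2; omega⟩, 0) (2 * Jx k)
        - Matrix.single (⟨k.1 + 1, by have := k.2; omega⟩, 0) (⟨k.1, by have := k.2; omega⟩, 1) (2 * Jx k)))
  + ∑ k : Fin (L - 1),
      (Matrix.single (⟨k.1, by have := k.2; omega⟩, 0) (⟨k.1 + 1, by have := k.2; omega⟩, 1) (-(2 * Jy k))
        - Matrix.single (⟨k.1 + 1, by have := k.2; omega⟩, 1) (⟨k.1, by have := k.2; omega⟩, 0) (-(2 * Jy k)))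

/-- The XY spin-chain Hamiltonian
`H_spin = −∑_{k=1}^{L−1} (J^x_k σ^x_k σ^x_{k+1} + J^y_k σ^y_k σ^y_{k+1}) − ∑_{k=1}^{L} B_k σ^z_k`. -/
def xyHamiltonian (L : ℕ) (Jx Jy : Fin (L - 1) → ℝ) (B : Fin L → ℝ) :
    Matrix (Fin L → Fin 2) (Fin L → Fin 2) ℂ :=
  -(∑ k : Fin (L - 1),
      ((Jx k : ℂ) • (pauliAt L pauliX ⟨k.1, by have := k.2; omega⟩
          * pauliAt L pauliX ⟨k.1 + 1, by have := k.2; omega⟩)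
        + (Jy k : ℂ) • (pauliAt L pauliY ⟨k.1, by have := k.2; omega⟩
          * pauliAt L pauliY ⟨k.1 + 1, by have := k.2; omega⟩)))
  - ∑ k : Fin L, (B k : ℂ) • pauliAt L pauliZ k

/-!
**Statement 11** (Jordan–Wigner form of the XY spin chain).
`H_spin = (i/4) ∑_{j,k=1}^{2L} A_{j,k} m_j m_k`.
-/

lemma pauliZZ : pauliZ * pauliZ = 1 := by
  ext i j
  fin_cases i <;> fin_cases j <;>
    simp [pauliZ, Matrix.mul_apply, Fin.sum_univ_two, Matrix.one_apply]

lemma pauliXY : pauliX * pauliY = Complex.I • pauliZ := by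
  ext i j
  fin_cases i <;> fin_cases j <;>
    simp [pauliX, pauliY, pauliZ, Matrix.mul_apply, Fin.sum_univ_two]

lemma pauliYX : pauliY * pauliX = (-Complex.I) • pauliZ := by
  ext i j
  fin_cases i <;> fin_cases j <;>
    simp [pauliX, pauliY, pauliZ, Matrix.mul_apply, Fin.sum_univ_two]

lemma pauliYZ : pauliY * pauliZ = Complex.I • pauliX := by
  ext i j
  fin_cases i <;> fin_cases j <;>
    simp [pauliX, pauliY, pauliZ, Matrix.mul_apply, Fin.sum_univ_two]

lemma pauliZY : pauliZ * pauliY = (-Complex.I) • pauliX := by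
  ext i j
  fin_cases i <;> fin_cases j <;>
    simp [pauliX, pauliY, pauliZ, Matrix.mul_apply, Fin.sum_univ_two]

lemma pauliXZ : pauliX * pauliZ = (-Complex.I) • pauliY := by
  ext i j
  fin_cases i <;> fin_cases j <;>
    simp [pauliX, pauliY, pauliZ, Matrix.mul_apply, Fin.sum_univ_two]

lemma pauliZX : pauliZ * pauliX = Complex.I • pauliY := by
  ext i j
  fin_cases i <;> fin_cases j <;>
    simp [pauliX, pauliY, pauliZ, Matrix.mul_apply, Fin.sum_univ_two]

lemma pauliAt_smul (L : ℕ) (σ : Matrix (Fin 2) (Fin 2) ℂ) (k : Fin L) (c : ℂ) :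
    pauliAt L (c • σ) k = c • pauliAt L σ k := by
  ext ν μ
  simp only [pauliAt, Matrix.smul_apply, smul_eq_mul]
  rw [← Finset.mul_prod_erase Finset.univ _ (Finset.mem_univ k),
    ← Finset.mul_prod_erase Finset.univ
      (fun j => if j = k then σ (ν j) (μ j) else if ν j = μ j then 1 else 0)
      (Finset.mem_univ k)]
  have h : ∀ g : Fin L → ℂ,
      (∏ j ∈ Finset.univ.erase k,
        (if j = k then g j else if ν j = μ j then (1:ℂ) else 0))
      = ∏ j ∈ Finset.univ.erase k, (if ν j = μ j then (1:ℂ) else 0) :=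
    fun g => Finset.prod_congr rfl fun j hj => by
      rw [if_neg (Finset.ne_of_mem_erase hj)]
  rw [h, h]
  simp only [eq_self_iff_true, if_true, Matrix.smul_apply, smul_eq_mul]
  ring


lemma jw_mul_same (L : ℕ) (k : Fin L) (α β : Matrix (Fin 2) (Fin 2) ℂ) :
    pauliProd L (fun j => if j < k then pauliZ else if j = k then α else 1) *
      pauliProd L (fun j => if j < k then pauliZ else if j = k then β else 1)
      = pauliAt L (α * β) k := by
  rw [pauliProd_mul, pauliAt_eq]
  refine congrArg (pauliProd L) (funext fun j => ?_)
  simp only [Pi.mul_apply]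
  by_cases h1 : j < k
  · simp [h1, ne_of_lt h1, pauliZZ]
  · by_cases h2 : j = k <;> simp [h1, h2]

lemma jw_mul_adj (L : ℕ) (a b : Fin L) (hab : a < b) (h2 : ∀ j : Fin L, j < b → j ≤ a)
    (α β : Matrix (Fin 2) (Fin 2) ℂ) :
    pauliProd L (fun j => if j < a then pauliZ else if j = a then α else 1) *
      pauliProd L (fun j => if j < b then pauliZ else if j = b then β else 1)
      = pauliAt L (α * pauliZ) a * pauliAt L β b := by
  rw [pauliProd_mul, pauliAt_eq, pauliAt_eq, pauliProd_mul]
  refine congrArg (pauliProd L) (funext fun j => ?_)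
  simp only [Pi.mul_apply]
  by_cases ha : j < a
  · have hb : j < b := lt_trans ha hab
    simp [ha, hb, ne_of_lt ha, ne_of_lt hb, pauliZZ]
  · by_cases hb : j = a
    · subst hb
      simp [ha, hab, ne_of_lt hab]
    · by_cases hc : j = b
      · subst hc
        simp [ha, hb, lt_irrefl]
      · have hd : ¬ j < b := fun h => hb (le_antisymm (h2 j h) (not_lt.mp ha))
        simp [ha, hb, hc, hd]

lemma jw_mul_adj' (L : ℕ) (a b : Fin L) (hab : a < b) (h2 : ∀ j : Fin L, j < b → j ≤ a)
    (α β : Matrix (Fin 2) (Fin 2) ℂ) :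
    pauliProd L (fun j => if j < b then pauliZ else if j = b then β else 1) *
      pauliProd L (fun j => if j < a then pauliZ else if j = a then α else 1)
      = pauliAt L (pauliZ * α) a * pauliAt L β b := by
  rw [pauliProd_mul, pauliAt_eq, pauliAt_eq, pauliProd_mul]
  refine congrArg (pauliProd L) (funext fun j => ?_)
  simp only [Pi.mul_apply]
  by_cases ha : j < a
  · have hb : j < b := lt_trans ha hab
    simp [ha, hb, ne_of_lt ha, ne_of_lt hb, pauliZZ]
  · by_cases hb : j = a
    · subst hb
      simp [ha, hab, ne_of_lt hab]
    · by_cases hc : j = b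
      · subst hc
        simp [ha, hb, lt_irrefl, not_lt.mpr (le_of_lt hab)]
      · have hd : ¬ j < b := fun h => hb (le_antisymm (h2 j h) (not_lt.mp ha))
        simp [ha, hb, hc, hd]

lemma quad_std {ι n : Type*} [Fintype ι] [DecidableEq ι] (a b : ι) (c : ℝ)
    (f : ι → ι → Matrix n n ℂ) :
    (∑ p : ι, ∑ q : ι, ((Matrix.single a b c p q : ℝ) : ℂ) • f p q)
      = (c : ℂ) • f a b := by
  rw [Finset.sum_eq_single a]
  · rw [Finset.sum_eq_single b]
    · rw [Matrix.single_apply_same]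
    · intro q _ hq
      rw [Matrix.single_apply_of_ne _ _ _ _ _ (fun h => hq h.2.symm)]
      simp
    · simp
  · intro p _ hp
    refine Finset.sum_eq_zero fun q _ => ?_
    rw [Matrix.single_apply_of_ne _ _ _ _ _ (fun h => hp h.1.symm)]
    simp
  · simp

lemma quad_add {ι n : Type*} [Fintype ι] (A B : Matrix ι ι ℝ) (f : ι → ι → Matrix n n ℂ) :
    (∑ p : ι, ∑ q : ι, (((A + B) p q : ℝ) : ℂ) • f p q)
      = (∑ p : ι, ∑ q : ι, ((A p q : ℝ) : ℂ) • f p q)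
        + ∑ p : ι, ∑ q : ι, ((B p q : ℝ) : ℂ) • f p q := by
  rw [← Finset.sum_add_distrib]
  refine Finset.sum_congr rfl fun p _ => ?_
  rw [← Finset.sum_add_distrib]
  refine Finset.sum_congr rfl fun q _ => ?_
  rw [Matrix.add_apply, Complex.ofReal_add, add_smul]

lemma quad_sub {ι n : Type*} [Fintype ι] (A B : Matrix ι ι ℝ) (f : ι → ι → Matrix n n ℂ) :
    (∑ p : ι, ∑ q : ι, (((A - B) p q : ℝ) : ℂ) • f p q)
      = (∑ p : ι, ∑ q : ι, ((A p q : ℝ) : ℂ) • f p q)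
        - ∑ p : ι, ∑ q : ι, ((B p q : ℝ) : ℂ) • f p q := by
  rw [← Finset.sum_sub_distrib]
  refine Finset.sum_congr rfl fun p _ => ?_
  rw [← Finset.sum_sub_distrib]
  refine Finset.sum_congr rfl fun q _ => ?_
  rw [Matrix.sub_apply, Complex.ofReal_sub, sub_smul]

lemma quad_sumk {ι n κ : Type*} [Fintype ι] [Fintype κ] (M : κ → Matrix ι ι ℝ)
    (f : ι → ι → Matrix n n ℂ) :
    (∑ p : ι, ∑ q : ι, (((∑ k : κ, M k) p q : ℝ) : ℂ) • f p q)
      = ∑ k : κ, ∑ p : ι, ∑ q : ι, ((M k p q : ℝ) : ℂ) • f p q := by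
  have h : ∀ p q : ι, (((∑ k : κ, M k) p q : ℝ) : ℂ) • f p q
      = ∑ k : κ, ((M k p q : ℝ) : ℂ) • f p q := fun p q => by
    rw [Matrix.sum_apply, Complex.ofReal_sum, Finset.sum_smul]
  simp only [h]
  exact (Finset.sum_congr rfl fun p _ => Finset.sum_comm).trans Finset.sum_comm


theorem xy_eq_quadratic_majorana (L : ℕ) (Jx Jy : Fin (L - 1) → ℝ) (B : Fin L → ℝ) :
    xyHamiltonian L Jx Jy B
      = (Complex.I / 4) •
          ∑ p : Fin L × Fin 2, ∑ q : Fin L × Fin 2,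
            (xyCoupling L Jx Jy B p q : ℂ) • (jw L p * jw L q) := by
  have jw00 : ∀ a : Fin L, jw L (a, 0) = jwOdd L a := fun a => rfl
  have jw01 : ∀ a : Fin L, jw L (a, 1) = jwEven L a := fun a => rfl
  rw [xyCoupling]
  simp only [quad_add, quad_sumk, quad_sub, quad_std, jw00, jw01]
  rw [smul_add, smul_add, Finset.smul_sum, Finset.smul_sum, Finset.smul_sum]
  have t1 : ∀ a : Fin L,
      (Complex.I / 4) • (((2 * B a : ℝ) : ℂ) • (jwOdd L a * jwEven L a)
          - ((2 * B a : ℝ) : ℂ) • (jwEven L a * jwOdd L a))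
        = -((B a : ℂ) • pauliAt L pauliZ a) := by
    intro a
    rw [jwOdd_eq, jwEven_eq, jw_mul_same, jw_mul_same, pauliXY, pauliYX,
      pauliAt_smul, pauliAt_smul]
    rw [smul_smul, smul_smul, ← sub_smul, smul_smul, ← neg_smul]
    congr 1
    push_cast
    linear_combination (B a : ℂ) * Complex.I_sq
  have t2 : ∀ k : Fin (L - 1),
      (Complex.I / 4) • (((2 * Jx k : ℝ) : ℂ) •
            (jwEven L ⟨k.1, by have := k.2; omega⟩ * jwOdd L ⟨k.1 + 1, by have := k.2; omega⟩)
          - ((2 * Jx k : ℝ) : ℂ) •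
            (jwOdd L ⟨k.1 + 1, by have := k.2; omega⟩ * jwEven L ⟨k.1, by have := k.2; omega⟩))
        = -((Jx k : ℂ) • (pauliAt L pauliX ⟨k.1, by have := k.2; omega⟩
            * pauliAt L pauliX ⟨k.1 + 1, by have := k.2; omega⟩)) := by
    intro k
    have hab : (⟨k.1, by have := k.2; omega⟩ : Fin L) < ⟨k.1 + 1, by have := k.2; omega⟩ :=
      Fin.mk_lt_mk.mpr (Nat.lt_succ_self _)
    have h2 : ∀ j : Fin L, j < (⟨k.1 + 1, by have := k.2; omega⟩ : Fin L)
        → j ≤ (⟨k.1, by have := k.2; omega⟩ : Fin L) := fun j hj => by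
      rw [Fin.lt_def] at hj
      rw [Fin.le_def]
      exact Nat.lt_succ_iff.mp hj
    rw [jwEven_eq, jwOdd_eq,
      jw_mul_adj L _ _ hab h2 pauliY pauliX, jw_mul_adj' L _ _ hab h2 pauliY pauliX,
      pauliYZ, pauliZY, pauliAt_smul, pauliAt_smul, smul_mul_assoc, smul_mul_assoc]
    rw [smul_smul, smul_smul, ← sub_smul, smul_smul, ← neg_smul]
    congr 1
    push_cast
    linear_combination (Jx k : ℂ) * Complex.I_sq
  have t3 : ∀ k : Fin (L - 1),
      (Complex.I / 4) • (((-(2 * Jy k) : ℝ) : ℂ) •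
            (jwOdd L ⟨k.1, by have := k.2; omega⟩ * jwEven L ⟨k.1 + 1, by have := k.2; omega⟩)
          - ((-(2 * Jy k) : ℝ) : ℂ) •
            (jwEven L ⟨k.1 + 1, by have := k.2; omega⟩ * jwOdd L ⟨k.1, by have := k.2; omega⟩))
        = -((Jy k : ℂ) • (pauliAt L pauliY ⟨k.1, by have := k.2; omega⟩
            * pauliAt L pauliY ⟨k.1 + 1, by have := k.2; omega⟩)) := by
    intro k
    have hab : (⟨k.1, by have := k.2; omega⟩ : Fin L) < ⟨k.1 + 1, by have := k.2; omega⟩ :=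
      Fin.mk_lt_mk.mpr (Nat.lt_succ_self _)
    have h2 : ∀ j : Fin L, j < (⟨k.1 + 1, by have := k.2; omega⟩ : Fin L)
        → j ≤ (⟨k.1, by have := k.2; omega⟩ : Fin L) := fun j hj => by
      rw [Fin.lt_def] at hj
      rw [Fin.le_def]
      exact Nat.lt_succ_iff.mp hj
    rw [jwOdd_eq, jwEven_eq,
      jw_mul_adj L _ _ hab h2 pauliX pauliY, jw_mul_adj' L _ _ hab h2 pauliX pauliY,
      pauliXZ, pauliZX, pauliAt_smul, pauliAt_smul, smul_mul_assoc, smul_mul_assoc]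
    rw [smul_smul, smul_smul, ← sub_smul, smul_smul, ← neg_smul]
    congr 1
    push_cast
    linear_combination (Jy k : ℂ) * Complex.I_sq
  rw [Finset.sum_congr rfl fun a _ => t1 a, Finset.sum_congr rfl fun k _ => t2 k,
    Finset.sum_congr rfl fun k _ => t3 k]
  rw [xyHamiltonian]
  simp only [Finset.sum_add_distrib, Finset.sum_neg_distrib]
  abel


end
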